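/- Let n = 3^s·t where s ≥ 1, t > 1 and 3 ∤ t. Then for every x ∈ [3n] and every integer i with 0 ≤ i ≤ s + 1, the i-th power of the standard shuffle satisfies σ^i(x) = 3^i·t·(⌊x/t⌋ mod 3^{s+1−i}) + 3^i·(x mod t) + ⌊x / (t·3^{s+1−i})⌋. (In digit notation: σ^i shifts the base-3 digits (x_s,...,x_0) of ⌊x/t⌋ up by i positions, filling the low positions and X with 0, and then adds the integer 3^i·X + Σ_{j=0}^{i−1} 3^{i−1−j}·x_{s−j}.) -/

import Mathlib

lemma shuffleAux.div_lt (k n : ℕ) (x : Fin (k * n)) : (x : ℕ) / n < k := by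
  have hx := x.isLt
  have hn : 0 < n := by
    rcases Nat.eq_zero_or_pos n with rfl | h
    · simp at hx
    · exact h
  exact (Nat.div_lt_iff_lt_mul hn).mpr hx

lemma shuffleAux.mod_lt (k n : ℕ) (x : Fin (k * n)) : (x : ℕ) % n < n := by
  have hx := x.isLt
  have hn : 0 < n := by
    rcases Nat.eq_zero_or_pos n with rfl | h
    · simp at hx
    · exact h
  exact Nat.mod_lt _ hn

lemma shuffleAux.bound1 (k n : ℕ) (x : Fin (k * n)) :
    k * ((x : ℕ) % n) + (x : ℕ) / n < k * n := by
  have h1 := shuffleAux.mod_lt k n x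
  have h2 := shuffleAux.div_lt k n x
  calc k * ((x : ℕ) % n) + (x : ℕ) / n
      < k * ((x : ℕ) % n) + k := by omega
    _ = k * ((x : ℕ) % n + 1) := by ring
    _ ≤ k * n := Nat.mul_le_mul_left _ (by omega)

lemma shuffleAux.bound2 (k n : ℕ) (x : Fin (k * n)) (j : Fin k) :
    (x : ℕ) % n + (j : ℕ) * n < k * n := by
  have h1 := shuffleAux.mod_lt k n x
  have h2 := j.isLt
  calc (x : ℕ) % n + (j : ℕ) * n
      < n + (j : ℕ) * n := by omega
    _ = ((j : ℕ) + 1) * n := by ring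
    _ ≤ k * n := Nat.mul_le_mul_right _ (by omega)

/-- The standard shuffle `σ` on a deck of `k * n` cards, where the card in position
`i + j·n` (`i ∈ [n]`, `j ∈ [k]`) is sent to position `k·i + j`; equivalently
`σ(x) = k·(x mod n) + ⌊x / n⌋`. -/
noncomputable def stdShuffle (k n : ℕ) : Equiv.Perm (Fin (k * n)) :=
  Equiv.ofBijective
    (fun x => ⟨k * ((x : ℕ) % n) + (x : ℕ) / n, shuffleAux.bound1 k n x⟩)
    (Finite.injective_iff_bijective.mp (by
      intro x y hxy
      simp only [Fin.mk.injEq] at hxy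
      have hk : 0 < k := lt_of_le_of_lt (Nat.zero_le _) (shuffleAux.div_lt k n x)
      have key : ∀ z : Fin (k * n),
          (k * ((z : ℕ) % n) + (z : ℕ) / n) % k = (z : ℕ) / n ∧
          (k * ((z : ℕ) % n) + (z : ℕ) / n) / k = (z : ℕ) % n := by
        intro z
        have hz := shuffleAux.div_lt k n z
        constructor
        · rw [Nat.mul_add_mod, Nat.mod_eq_of_lt hz]
        · rw [Nat.mul_add_div hk, Nat.div_eq_of_lt hz, Nat.add_zero]
      obtain ⟨h1x, h2x⟩ := key x
      obtain ⟨h1y, h2y⟩ := key y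
      rw [hxy] at h1x h2x
      have hd : (x : ℕ) / n = (y : ℕ) / n := by omega
      have hm : (x : ℕ) % n = (y : ℕ) % n := by omega
      apply Fin.ext
      rw [← Nat.div_add_mod (x : ℕ) n, ← Nat.div_add_mod (y : ℕ) n, hd, hm]))

/-- The permutation `ρ_τ` induced by a permutation `τ` of the `k` piles:
`ρ_τ(i + j·n) = i + τ(j)·n` for `i ∈ [n]`, `j ∈ [k]`. -/
noncomputable def pilePerm (k n : ℕ) (τ : Equiv.Perm (Fin k)) : Equiv.Perm (Fin (k * n)) :=
  Equiv.ofBijective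
    (fun x => ⟨(x : ℕ) % n + ((τ ⟨(x : ℕ) / n, shuffleAux.div_lt k n x⟩ : Fin k) : ℕ) * n,
      shuffleAux.bound2 k n x _⟩)
    (Finite.injective_iff_bijective.mp (by
      intro x y hxy
      simp only [Fin.mk.injEq] at hxy
      have hn : 0 < n := lt_of_le_of_lt (Nat.zero_le _) (shuffleAux.mod_lt k n x)
      have key : ∀ z : Fin (k * n),
          ((z : ℕ) % n + ((τ ⟨(z : ℕ) / n, shuffleAux.div_lt k n z⟩ : Fin k) : ℕ) * n) % n
            = (z : ℕ) % n ∧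
          ((z : ℕ) % n + ((τ ⟨(z : ℕ) / n, shuffleAux.div_lt k n z⟩ : Fin k) : ℕ) * n) / n
            = ((τ ⟨(z : ℕ) / n, shuffleAux.div_lt k n z⟩ : Fin k) : ℕ) := by
        intro z
        have h1 := shuffleAux.mod_lt k n z
        constructor
        · rw [Nat.add_mul_mod_self_right, Nat.mod_eq_of_lt h1]
        · rw [Nat.add_mul_div_right _ _ hn, Nat.div_eq_of_lt h1, Nat.zero_add]
      obtain ⟨h1x, h2x⟩ := key x
      obtain ⟨h1y, h2y⟩ := key y
      rw [hxy] at h1x h2x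
      have hm : (x : ℕ) % n = (y : ℕ) % n := by omega
      have hv : ((τ ⟨(x : ℕ) / n, shuffleAux.div_lt k n x⟩ : Fin k) : ℕ)
          = ((τ ⟨(y : ℕ) / n, shuffleAux.div_lt k n y⟩ : Fin k) : ℕ) := by omega
      have hτ : (⟨(x : ℕ) / n, shuffleAux.div_lt k n x⟩ : Fin k)
          = ⟨(y : ℕ) / n, shuffleAux.div_lt k n y⟩ := τ.injective (Fin.ext hv)
      have hd : (x : ℕ) / n = (y : ℕ) / n := congrArg Fin.val hτ
      apply Fin.ext
      rw [← Nat.div_add_mod (x : ℕ) n, ← Nat.div_add_mod (y : ℕ) n, hd, hm]))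

/-- The shuffle group `G_{k,kn}`, generated by the standard shuffle `σ` together with
the pile permutations `ρ_τ` for all `τ ∈ Sym([k])`. -/
noncomputable def shuffleGroup (k n : ℕ) : Subgroup (Equiv.Perm (Fin (k * n))) :=
  Subgroup.closure ({stdShuffle k n} ∪ Set.range (pilePerm k n))


lemma stdShuffle_apply_val (k n : ℕ) (x : Fin (k * n)) :
    ((stdShuffle k n) x : ℕ) = k * ((x : ℕ) % n) + (x : ℕ) / n := rfl

theorem sigma_pow_formula (s t n : ℕ) (hs : 1 ≤ s) (ht : 1 < t) (h3t : ¬ 3 ∣ t) (hn : n = 3 ^ s * t) :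
    ∀ (x : Fin (3 * n)) (i : ℕ), i ≤ s + 1 →
      ((stdShuffle 3 n ^ i) x : ℕ) =
        3 ^ i * t * (((x : ℕ) / t) % 3 ^ (s + 1 - i)) + 3 ^ i * ((x : ℕ) % t) +
          (x : ℕ) / (t * 3 ^ (s + 1 - i)) := by
  intro x i
  have ht0 : 0 < t := by omega
  have hx : (x : ℕ) < 3 ^ (s + 1) * t := by
    calc (x : ℕ) < 3 * n := x.isLt
      _ = 3 ^ (s + 1) * t := by rw [hn]; ring
  have hq3 : (x : ℕ) / t < 3 ^ (s + 1) :=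
    (Nat.div_lt_iff_lt_mul ht0).mpr hx
  induction i with
  | zero =>
    intro _
    have h2 : (x : ℕ) / (t * 3 ^ (s + 1)) = 0 := Nat.div_eq_of_lt (lt_of_lt_of_eq hx (mul_comm _ _))
    simp only [pow_zero, Equiv.Perm.coe_one, id_eq, one_mul, Nat.sub_zero,
      Nat.mod_eq_of_lt hq3, h2, add_zero]
    exact (Nat.div_add_mod (x : ℕ) t).symm
  | succ i ih =>
    intro hi
    have hIH := ih (by omega)
    set q := (x : ℕ) / t with hqdef
    set X := (x : ℕ) % t with hXdef
    set e := s - i with hedef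
    have hse : s + 1 - i = e + 1 := by omega
    have hse2 : s + 1 - (i + 1) = e := by omega
    have hsie : s = i + e := by omega
    rw [hse] at hIH
    rw [hse2]
    set m := q % 3 ^ (e + 1) with hmdef
    set d := q / 3 ^ (e + 1) with hddef
    set a := m / 3 ^ e with hadef
    set b := m % 3 ^ e with hbdef
    have h3e : (0:ℕ) < 3 ^ e := pow_pos (by norm_num) e
    have h3i : (0:ℕ) < 3 ^ i := pow_pos (by norm_num) i
    have hm3 : m < 3 ^ (e + 1) := Nat.mod_lt _ (pow_pos (by norm_num) _)
    have hma : m = 3 ^ e * a + b := by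
      rw [hadef, hbdef]; exact (Nat.div_add_mod m (3 ^ e)).symm
    have ha3 : a < 3 := (Nat.div_lt_iff_lt_mul h3e).mpr
      (by calc m < 3 ^ (e + 1) := hm3
            _ = 3 * 3 ^ e := by ring)
    have hd3 : d < 3 ^ i := (Nat.div_lt_iff_lt_mul (pow_pos (by norm_num) _)).mpr
      (by calc q < 3 ^ (s + 1) := hq3
            _ = 3 ^ i * 3 ^ (e + 1) := by rw [hsie]; ring)
    have hblt : b < 3 ^ e := Nat.mod_lt _ h3e
    have hXlt : X < t := Nat.mod_lt _ ht0
    have hnpos : 0 < n := by rw [hn]; positivity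
    have hneq : n = 3 ^ i * t * 3 ^ e := by rw [hn, hsie, pow_add]; ring
    have hy : ((stdShuffle 3 n ^ (i + 1)) x : ℕ)
        = 3 * (((stdShuffle 3 n ^ i) x : ℕ) % n) + ((stdShuffle 3 n ^ i) x : ℕ) / n := by
      rw [pow_succ' (stdShuffle 3 n) i, Equiv.Perm.mul_apply, stdShuffle_apply_val]
    have hdeq : (x : ℕ) / (t * 3 ^ (e + 1)) = d := by
      rw [hddef, hqdef, Nat.div_div_eq_div_mul]
    rw [hy, hIH, hdeq]
    set r := 3 ^ i * t * b + 3 ^ i * X + d with hrdef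
    have hyval : 3 ^ i * t * m + 3 ^ i * X + d = r + a * n := by
      rw [hma, hneq, hrdef]; ring
    have hrlt : r < n := by
      have h1 : 3 ^ i * t * b + 3 ^ i * t ≤ 3 ^ i * t * 3 ^ e := by
        calc 3 ^ i * t * b + 3 ^ i * t = 3 ^ i * t * (b + 1) := by ring
          _ ≤ 3 ^ i * t * 3 ^ e := Nat.mul_le_mul_left _ hblt
      have h2 : 3 ^ i * X + 3 ^ i ≤ 3 ^ i * t := by
        calc 3 ^ i * X + 3 ^ i = 3 ^ i * (X + 1) := by ring
          _ ≤ 3 ^ i * t := Nat.mul_le_mul_left _ hXlt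
      rw [hneq]
      omega
    have hmod : (3 ^ i * t * m + 3 ^ i * X + d) % n = r := by
      rw [hyval, Nat.add_mul_mod_self_right, Nat.mod_eq_of_lt hrlt]
    have hdiv : (3 ^ i * t * m + 3 ^ i * X + d) / n = a := by
      rw [hyval, Nat.add_mul_div_right _ _ hnpos, Nat.div_eq_of_lt hrlt, Nat.zero_add]
    rw [hmod, hdiv]
    have hqe : q % 3 ^ e = b := by
      rw [hbdef, hmdef, Nat.mod_mod_of_dvd _ (pow_dvd_pow 3 (by omega))]
    have hxdiv : (x : ℕ) / (t * 3 ^ e) = 3 * d + a := by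
      rw [← Nat.div_div_eq_div_mul, ← hqdef]
      have hqeq : q = b + 3 ^ e * (a + 3 * d) := by
        have h1 := Nat.div_add_mod q (3 ^ (e + 1))
        rw [← hmdef, ← hddef, hma] at h1
        calc q = 3 ^ (e + 1) * d + (3 ^ e * a + b) := h1.symm
          _ = b + 3 ^ e * (a + 3 * d) := by ring
      rw [hqeq, Nat.add_mul_div_left _ _ h3e, Nat.div_eq_of_lt hblt, Nat.zero_add]
      omega
    rw [hqe, hxdiv]
    ring
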